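/- Let n ≥ 1 and let Γ = Γ(U_{6n}) be the non-commuting graph of U_{6n}. The metric dimension of Γ is β(Γ) = 3 if n = 1, and β(Γ) = 5n − 4 if n > 1. -/

import Mathlib

/-- The inversion automorphism of `Multiplicative (ZMod 3)` (i.e. `b ↦ b⁻¹`). -/
def negAut : MulAut (Multiplicative (ZMod 3)) := MulEquiv.inv (Multiplicative (ZMod 3))

lemma negAut_sq : negAut * negAut = 1 := by
  ext x
  simp [negAut]

/-- The action of `ZMod (2*n)` on `Multiplicative (ZMod 3)`, where the generator acts
by inversion (negation). -/
def U6nAct (n : ℕ) : Multiplicative (ZMod (2 * n)) →* MulAut (Multiplicative (ZMod 3)) :=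
  AddMonoidHom.toMultiplicativeLeft
    (ZMod.lift (2 * n) ⟨zmultiplesHom _ (Additive.ofMul negAut), by
      show ((2 * n : ℕ) : ℤ) • Additive.ofMul negAut = 0
      have : negAut ^ (2 * n) = 1 := by
        rw [pow_mul, pow_two, negAut_sq, one_pow]
      rw [← zpow_natCast negAut, Nat.cast_mul] at this
      rw [show ((2 * n : ℕ) : ℤ) • Additive.ofMul negAut
            = Additive.ofMul (negAut ^ ((2 * n : ℕ) : ℤ)) from rfl]
      rw [Nat.cast_mul, this]; rfl⟩)

/-- The group `U_{6n} = ⟨a, b | a^(2n) = b³ = 1, a⁻¹ b a = b⁻¹⟩`, realized as the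
semidirect product `(ZMod 3) ⋊ (ZMod (2n))` where the generator of `ZMod (2n)` acts by
negation. -/
abbrev U6n (n : ℕ) := SemidirectProduct (Multiplicative (ZMod 3))
    (Multiplicative (ZMod (2 * n))) (U6nAct n)

/-- The generator `a` of `U_{6n}`, of order `2n`. -/
def Ua (n : ℕ) : U6n n := SemidirectProduct.inr (Multiplicative.ofAdd 1)

/-- The generator `b` of `U_{6n}`, of order `3`. -/
def Ub (n : ℕ) : U6n n := SemidirectProduct.inl (Multiplicative.ofAdd 1)

/-- The non-commuting graph of `U_{6n}`: vertices are the non-central elements, two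
distinct vertices are adjacent iff they do not commute. -/
def ncGraph (n : ℕ) : SimpleGraph {x : U6n n // x ∉ Subgroup.center (U6n n)} where
  Adj u v := u.val * v.val ≠ v.val * u.val
  symm := ⟨fun _ _ h => fun e => h e.symm⟩
  loopless := ⟨fun _ h => h rfl⟩

/-- `W` is a resolving set for the non-commuting graph of `U_{6n}` if every pair of
distinct vertices is distinguished by its distances to some element of `W`. -/
def Resolving (n : ℕ) (W : Finset {x : U6n n // x ∉ Subgroup.center (U6n n)}) : Prop :=
  ∀ u v : {x : U6n n // x ∉ Subgroup.center (U6n n)}, u ≠ v →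
    ∃ w ∈ W, (ncGraph n).dist u w ≠ (ncGraph n).dist v w

def sdpEquiv (n : ℕ) : U6n n ≃ (Multiplicative (ZMod 3) × Multiplicative (ZMod (2*n))) :=
  ⟨fun g => (g.left, g.right), fun p => ⟨p.1, p.2⟩, fun g => rfl, fun p => rfl⟩

instance (n : ℕ) [NeZero n] : Fintype (U6n n) := Fintype.ofEquiv _ (sdpEquiv n).symm

instance (n : ℕ) : DecidableEq (U6n n) := (sdpEquiv n).decidableEq

noncomputable instance (n : ℕ) :
    DecidablePred (fun x : U6n n => x ∈ Subgroup.center (U6n n)) :=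
  fun _ => Classical.dec _

noncomputable instance (n : ℕ) [NeZero n] : Fintype {x : U6n n // x ∉ Subgroup.center (U6n n)} :=
  Subtype.fintype _
open Multiplicative SemidirectProduct

def eps (n : ℕ) : ZMod (2*n) →+* ZMod 2 := ZMod.castHom (dvd_mul_right 2 n) (ZMod 2)

lemma negAut_pow (m : ℕ) : ∀ x : Multiplicative (ZMod 3),
    (negAut ^ m) x = if Even m then x else x⁻¹ := by
  induction m with
  | zero => intro x; simp
  | succ k ih =>
    intro x
    rw [pow_succ, MulAut.mul_apply]
    have h1 : negAut x = x⁻¹ := rfl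
    rw [h1, ih]
    rcases Nat.even_or_odd k with h | h
    · simp [h, Nat.even_add_one]
    · simp [Nat.even_add_one, Nat.not_even_iff_odd.mpr h]

lemma U6nAct_one (n : ℕ) : U6nAct n (ofAdd (1 : ZMod (2*n))) = negAut := by
  have h1 : (1 : ZMod (2*n)) = ((1:ℤ) : ZMod (2*n)) := by push_cast; rfl
  ext x
  simp only [U6nAct, AddMonoidHom.toMultiplicativeLeft_apply_apply, toAdd_ofAdd]
  rw [h1, ZMod.lift_coe]
  rfl

lemma act_apply (n : ℕ) [NeZero n] (j : ZMod (2*n)) (x : Multiplicative (ZMod 3)) :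
    U6nAct n (ofAdd j) x = if eps n j = 0 then x else x⁻¹ := by
  haveI : NeZero (2*n) := ⟨by have := NeZero.ne n; omega⟩
  have hj : ofAdd j = (ofAdd (1 : ZMod (2*n)))^(j.val) := by
    rw [← ofAdd_nsmul]
    congr 1
    rw [nsmul_eq_mul, mul_one, ZMod.natCast_val, ZMod.cast_id]
  rw [hj, map_pow, U6nAct_one, negAut_pow]
  have h3 : eps n j = ((j.val : ℕ) : ZMod 2) := by
    show ZMod.castHom _ _ j = _
    rw [ZMod.castHom_apply, ← ZMod.natCast_val]
  rw [h3]
  have h4 : ((j.val : ZMod 2) = 0) ↔ Even j.val := by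
    rw [ZMod.natCast_eq_zero_iff]
    exact ⟨fun h => (even_iff_two_dvd).mpr h, fun h => (even_iff_two_dvd).mp h⟩
  by_cases h : Even j.val
  · rw [if_pos h, if_pos (h4.mpr h)]
  · rw [if_neg h, if_neg (fun hc => h (h4.mp hc))]
variable {n : ℕ}

lemma act_apply' (n : ℕ) [NeZero n] (r : Multiplicative (ZMod (2*n))) (x : Multiplicative (ZMod 3)) :
    U6nAct n r x = if eps n r.toAdd = 0 then x else x⁻¹ := act_apply n r.toAdd x

lemma comm_iff [NeZero n] (g h : U6n n) :
    g * h = h * g ↔ g.left * U6nAct n g.right h.left = h.left * U6nAct n h.right g.left := by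
  constructor
  · intro e
    have := congrArg SemidirectProduct.left e
    rwa [SemidirectProduct.mul_left, SemidirectProduct.mul_left] at this
  · intro e
    ext
    · rwa [SemidirectProduct.mul_left, SemidirectProduct.mul_left]
    · rw [SemidirectProduct.mul_right, SemidirectProduct.mul_right]
      exact mul_comm g.right h.right

lemma eps_one_ne [NeZero n] : eps n (1 : ZMod (2*n)) ≠ 0 := by
  rw [map_one]; decide

lemma mem_center_iff_u [NeZero n] (g : U6n n) :
    g ∈ Subgroup.center (U6n n) ↔ eps n g.right.toAdd = 0 ∧ g.left = 1 := by
  rw [Subgroup.mem_center_iff]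
  constructor
  · intro hc
    constructor
    · by_contra he
      have h2 := hc (SemidirectProduct.inl (Multiplicative.ofAdd (1 : ZMod 3)))
      rw [comm_iff, SemidirectProduct.left_inl, SemidirectProduct.right_inl,
        act_apply', act_apply'] at h2
      revert h2
      simp [he]
      generalize g.left = x
      revert x
      decide
    · have h2 := hc (SemidirectProduct.inr (Multiplicative.ofAdd (1 : ZMod (2*n))))
      rw [comm_iff, SemidirectProduct.left_inr, SemidirectProduct.right_inr,
        act_apply', act_apply'] at h2
      revert h2
      simp [eps_one_ne]
      generalize g.left = x
      revert x
      decide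
  · rintro ⟨he, hl⟩ h
    rw [comm_iff, act_apply', act_apply', hl, he]
    simp
abbrev Vx (n : ℕ) := {x : U6n n // x ∉ Subgroup.center (U6n n)}

/-- class of a vertex -/
def cls (n : ℕ) (u : Vx n) : Option (ZMod 3) :=
  if eps n u.val.right.toAdd = 0 then none else some u.val.left.toAdd

lemma comm_iff_cls [NeZero n] (u v : Vx n) :
    u.val * v.val = v.val * u.val ↔ cls n u = cls n v := by
  obtain ⟨g, hg⟩ := u
  obtain ⟨h, hh⟩ := v
  rw [mem_center_iff_u] at hg hh
  rw [comm_iff, act_apply', act_apply']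
  unfold cls
  simp only
  by_cases he : eps n g.right.toAdd = 0 <;> by_cases hf : eps n h.right.toAdd = 0
  · rw [if_pos he, if_pos hf, if_pos he, if_pos hf]
    simp [mul_comm]
  · rw [if_neg hf, if_pos he, if_pos he, if_neg hf]
    have hgl : g.left ≠ 1 := fun h1 => hg ⟨he, h1⟩
    simp only [iff_false, reduceCtorEq]
    revert hgl
    generalize g.left = x
    generalize h.left = y
    revert x y
    decide
  · rw [if_neg he, if_pos hf, if_pos hf, if_neg he]
    have hhl : h.left ≠ 1 := fun h1 => hh ⟨hf, h1⟩
    simp only [iff_false, reduceCtorEq]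
    revert hhl
    generalize g.left = x
    generalize h.left = y
    revert x y
    decide
  · rw [if_neg he, if_neg hf, if_neg he, if_neg hf]
    rw [Option.some_inj]
    constructor
    · intro h1
      have : g.left = h.left := by
        revert h1
        generalize g.left = x
        generalize h.left = y
        revert x y
        decide
      rw [this]
    · intro h1
      have : g.left = h.left := by
        exact Multiplicative.toAdd.injective h1
      rw [this, mul_comm]

lemma adj_iff [NeZero n] (u v : Vx n) : (ncGraph n).Adj u v ↔ cls n u ≠ cls n v := by
  rw [show (ncGraph n).Adj u v ↔ ¬(u.val * v.val = v.val * u.val) from Iff.rfl, comm_iff_cls]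
def vc (n : ℕ) [NeZero n] : Vx n :=
  ⟨SemidirectProduct.inl (Multiplicative.ofAdd 1), by
    rw [mem_center_iff_u]
    rintro ⟨-, h⟩
    rw [SemidirectProduct.left_inl] at h
    revert h; decide⟩

def va (n : ℕ) [NeZero n] (x : ZMod 3) : Vx n :=
  ⟨⟨Multiplicative.ofAdd x, Multiplicative.ofAdd 1⟩, by
    rw [mem_center_iff_u]
    rintro ⟨h, -⟩
    exact eps_one_ne h⟩

lemma cls_vc [NeZero n] : cls n (vc n) = none := by
  have h : eps n ((vc n).val.right.toAdd) = 0 := by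
    show eps n (Multiplicative.toAdd 1) = 0
    rw [toAdd_one, map_zero]
  unfold cls
  rw [if_pos h]

lemma cls_va [NeZero n] (x : ZMod 3) : cls n (va n x) = some x := by
  have h : ¬ eps n ((va n x).val.right.toAdd) = 0 := by
    show ¬ eps n (Multiplicative.toAdd (Multiplicative.ofAdd (1:ZMod (2*n)))) = 0
    rw [toAdd_ofAdd]
    exact eps_one_ne
  unfold cls
  rw [if_neg h]
  rfl

lemma exists_ne_cls [NeZero n] (o : Option (ZMod 3)) : ∃ z : Vx n, cls n z ≠ o := by
  cases o with
  | none => exact ⟨va n 0, by rw [cls_va]; simp⟩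
  | some x => exact ⟨vc n, by rw [cls_vc]; simp⟩

lemma dist_eq [NeZero n] (u w : Vx n) :
    (ncGraph n).dist u w = if u = w then 0 else if cls n u = cls n w then 2 else 1 := by
  by_cases h1 : u = w
  · rw [if_pos h1, h1, SimpleGraph.dist_self]
  · rw [if_neg h1]
    by_cases h2 : cls n u = cls n w
    · rw [if_pos h2]
      obtain ⟨z, hz⟩ := exists_ne_cls (n := n) (cls n u)
      have a1 : (ncGraph n).Adj u z := (adj_iff u z).mpr (fun e => hz e.symm)
      have a2 : (ncGraph n).Adj z w := (adj_iff z w).mpr (fun e => hz (e.trans h2.symm))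
      have hle := SimpleGraph.dist_le
        (SimpleGraph.Walk.cons a1 (SimpleGraph.Walk.cons a2 SimpleGraph.Walk.nil))
      simp only [SimpleGraph.Walk.length_cons, SimpleGraph.Walk.length_nil] at hle
      have hne0 : (ncGraph n).dist u w ≠ 0 := by
        rw [SimpleGraph.dist_ne_zero_iff_ne_and_reachable]
        exact ⟨h1, ⟨SimpleGraph.Walk.cons a1 (SimpleGraph.Walk.cons a2 SimpleGraph.Walk.nil)⟩⟩
      have hadj : ¬ (ncGraph n).Adj u w := by
        rw [adj_iff]
        simpa using h2
      have hne1 : (ncGraph n).dist u w ≠ 1 := fun hx =>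
        hadj (SimpleGraph.dist_eq_one_iff_adj.mp hx)
      omega
    · rw [if_neg h2, SimpleGraph.dist_eq_one_iff_adj, adj_iff]
      exact h2
open Finset in
lemma resolving_iff (n : ℕ) [NeZero n] (W : Finset (Vx n)) :
    Resolving n W ↔
      ((∀ u v : Vx n, u ≠ v → cls n u = cls n v → u ∈ W ∨ v ∈ W) ∧
       (∀ u v : Vx n, u ≠ v → cls n u ≠ cls n v → u ∉ W → v ∉ W →
          ∃ w ∈ W, cls n w = cls n u ∨ cls n w = cls n v)) := by
  constructor
  · intro hR
    constructor
    · intro u v huv hc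
      by_contra hor
      push_neg at hor
      obtain ⟨w, hw, hd⟩ := hR u v huv
      rw [dist_eq, dist_eq] at hd
      have hwu : ¬ u = w := fun e => hor.1 (by rw [e]; exact hw)
      have hwv : ¬ v = w := fun e => hor.2 (by rw [e]; exact hw)
      rw [if_neg hwu, if_neg hwv, hc] at hd
      exact hd rfl
    · intro u v huv hc hu hv
      obtain ⟨w, hw, hd⟩ := hR u v huv
      refine ⟨w, hw, ?_⟩
      by_contra hor
      push_neg at hor
      rw [dist_eq, dist_eq] at hd
      have hwu : ¬ u = w := fun e => hu (by rw [e]; exact hw)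
      have hwv : ¬ v = w := fun e => hv (by rw [e]; exact hw)
      rw [if_neg hwu, if_neg hwv,
        if_neg (show ¬ cls n u = cls n w from fun e => hor.1 e.symm),
        if_neg (show ¬ cls n v = cls n w from fun e => hor.2 e.symm)] at hd
      exact hd rfl
  · rintro ⟨h1, h2⟩ u v huv
    by_cases hc : cls n u = cls n v
    · rcases h1 u v huv hc with hu | hv
      · refine ⟨u, hu, ?_⟩
        rw [dist_eq, dist_eq, if_pos rfl, if_neg (fun e => huv e.symm)]
        split_ifs <;> omega
      · refine ⟨v, hv, ?_⟩
        rw [dist_eq, dist_eq, if_pos rfl, if_neg huv]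
        split_ifs <;> omega
    · by_cases hu : u ∈ W
      · refine ⟨u, hu, ?_⟩
        rw [dist_eq, dist_eq, if_pos rfl, if_neg (fun e => huv e.symm)]
        split_ifs <;> omega
      · by_cases hv : v ∈ W
        · refine ⟨v, hv, ?_⟩
          rw [dist_eq, dist_eq, if_pos rfl, if_neg huv]
          split_ifs <;> omega
        · obtain ⟨w, hw, hor⟩ := h2 u v huv hc hu hv
          refine ⟨w, hw, ?_⟩
          have hwu : ¬ u = w := fun e => hu (by rw [e]; exact hw)
          have hwv : ¬ v = w := fun e => hv (by rw [e]; exact hw)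
          rw [dist_eq, dist_eq, if_neg hwu, if_neg hwv]
          rcases hor with h | h
          · rw [if_pos h.symm, if_neg (show ¬ cls n v = cls n w from
              fun e => hc (h.symm.trans e.symm))]
            omega
          · rw [if_neg (show ¬ cls n u = cls n w from fun e => hc (e.trans h)),
              if_pos h.symm]
            omega
example (n : ℕ) [NeZero n] : NeZero (2*n) := inferInstance

lemma zmod2_cases (z : ZMod 2) : z = 0 ∨ z = 1 := by revert z; decide

lemma card_eps0 (n : ℕ) [NeZero n] : Fintype.card {j : ZMod (2*n) // eps n j = 0} = n := by
  have e : {j : ZMod (2*n) // eps n j = 0} ≃ {j : ZMod (2*n) // eps n j = 1} :=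
    { toFun := fun j => ⟨j.1 + 1, by rw [map_add, j.2, map_one, zero_add]⟩
      invFun := fun j => ⟨j.1 - 1, by rw [map_sub, j.2, map_one, sub_self]⟩
      left_inv := fun j => Subtype.ext (by simp)
      right_inv := fun j => Subtype.ext (by simp) }
  have h1 : ∀ z : ZMod 2, z = 1 ↔ ¬ z = 0 := by decide
  have e2 : {j : ZMod (2*n) // eps n j = 1} ≃ {j : ZMod (2*n) // ¬ eps n j = 0} :=
    Equiv.subtypeEquivRight (fun j => h1 _)
  have hc : Fintype.card {j : ZMod (2*n) // eps n j = 0}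
      + Fintype.card {j : ZMod (2*n) // ¬ eps n j = 0} = 2*n := by
    rw [Fintype.card_subtype, Fintype.card_subtype,
      Finset.card_filter_add_card_filter_not, Finset.card_univ, ZMod.card]
  have := Fintype.card_congr (e.trans e2)
  omega

lemma card_eps1 (n : ℕ) [NeZero n] : Fintype.card {j : ZMod (2*n) // eps n j = 1} = n := by
  have h1 : ∀ z : ZMod 2, z = 1 ↔ ¬ z = 0 := by decide
  have e2 : {j : ZMod (2*n) // eps n j = 1} ≃ {j : ZMod (2*n) // ¬ eps n j = 0} :=
    Equiv.subtypeEquivRight (fun j => h1 _)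
  have hc : Fintype.card {j : ZMod (2*n) // eps n j = 0}
      + Fintype.card {j : ZMod (2*n) // ¬ eps n j = 0} = 2*n := by
    rw [Fintype.card_subtype, Fintype.card_subtype,
      Finset.card_filter_add_card_filter_not, Finset.card_univ, ZMod.card]
  have := Fintype.card_congr e2
  have := card_eps0 n
  omega

lemma cls_eq_none_iff {n : ℕ} [NeZero n] (u : Vx n) :
    cls n u = none ↔ eps n u.val.right.toAdd = 0 := by
  unfold cls
  split_ifs with h <;> simp [h]

lemma cls_eq_some_iff {n : ℕ} [NeZero n] (u : Vx n) (x : ZMod 3) :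
    cls n u = some x ↔ (¬ eps n u.val.right.toAdd = 0 ∧ u.val.left.toAdd = x) := by
  unfold cls
  split_ifs with h <;> simp [h]
open Multiplicative

variable {n : ℕ}

lemma eps_one_of_cls_some [NeZero n] {u : Vx n} {x : ZMod 3} (hu : cls n u = some x) :
    eps n u.val.right.toAdd = 1 := by
  obtain ⟨he, -⟩ := (cls_eq_some_iff u x).mp hu
  rcases zmod2_cases (eps n u.val.right.toAdd) with h | h
  · exact absurd h he
  · exact h

lemma left_of_cls_some [NeZero n] {u : Vx n} {x : ZMod 3} (hu : cls n u = some x) :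
    u.val.left = ofAdd x := by
  obtain ⟨-, hl⟩ := (cls_eq_some_iff u x).mp hu
  rw [← hl, ofAdd_toAdd]

lemma nc_mk_odd [NeZero n] (x : ZMod 3) (j : ZMod (2*n)) (hj : eps n j = 1) :
    (⟨ofAdd x, ofAdd j⟩ : U6n n) ∉ Subgroup.center (U6n n) := by
  rw [mem_center_iff_u]
  rintro ⟨he, -⟩
  revert he
  show ¬ eps n (ofAdd j).toAdd = 0
  rw [toAdd_ofAdd, hj]
  exact one_ne_zero

lemma nc_mk_even [NeZero n] (x : ZMod 3) (j : ZMod (2*n)) (hx : ¬ x = 0) :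
    (⟨ofAdd x, ofAdd j⟩ : U6n n) ∉ Subgroup.center (U6n n) := by
  rw [mem_center_iff_u]
  rintro ⟨-, hl⟩
  apply hx
  have h2 := congrArg toAdd hl
  rwa [toAdd_ofAdd, toAdd_one] at h2

lemma card_fiber_some [NeZero n] (x : ZMod 3) :
    Fintype.card {u : Vx n // cls n u = some x} = n := by
  have e : {u : Vx n // cls n u = some x} ≃ {j : ZMod (2*n) // eps n j = 1} :=
    { toFun := fun u => ⟨u.1.val.right.toAdd, eps_one_of_cls_some u.2⟩
      invFun := fun j => ⟨⟨⟨ofAdd x, ofAdd j.1⟩, nc_mk_odd x j.1 j.2⟩, by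
        rw [cls_eq_some_iff]
        refine ⟨?_, by rw [toAdd_ofAdd]⟩
        show ¬ eps n (ofAdd j.1).toAdd = 0
        rw [toAdd_ofAdd, j.2]
        exact one_ne_zero⟩
      left_inv := by
        rintro ⟨u, hu⟩
        apply Subtype.ext
        apply Subtype.ext
        show (⟨ofAdd x, ofAdd u.val.right.toAdd⟩ : U6n n) = u.val
        rw [← left_of_cls_some hu, ofAdd_toAdd]
      right_inv := by
        rintro ⟨j, hj⟩
        apply Subtype.ext
        show (ofAdd j).toAdd = j
        rw [toAdd_ofAdd] }
  rw [Fintype.card_congr e, card_eps1]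

lemma card_fiber_none [NeZero n] :
    Fintype.card {u : Vx n // cls n u = none} = 2 * n := by
  have h3 : Fintype.card {x : ZMod 3 // ¬ x = 0} = 2 := by decide
  have e : {u : Vx n // cls n u = none}
      ≃ ({x : ZMod 3 // ¬ x = 0} × {j : ZMod (2*n) // eps n j = 0}) :=
    { toFun := fun u =>
        (⟨u.1.val.left.toAdd, by
          have he := (cls_eq_none_iff u.1).mp u.2
          have hnc := u.1.2
          rw [mem_center_iff_u] at hnc
          intro hx
          apply hnc
          refine ⟨he, ?_⟩
          rw [← ofAdd_toAdd u.1.val.left, hx]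
          rfl⟩,
         ⟨u.1.val.right.toAdd, (cls_eq_none_iff u.1).mp u.2⟩)
      invFun := fun p => ⟨⟨⟨ofAdd p.1.1, ofAdd p.2.1⟩, nc_mk_even p.1.1 p.2.1 p.1.2⟩, by
        rw [cls_eq_none_iff]
        show eps n (ofAdd p.2.1).toAdd = 0
        rw [toAdd_ofAdd]
        exact p.2.2⟩
      left_inv := by
        rintro ⟨u, hu⟩
        apply Subtype.ext
        apply Subtype.ext
        show (⟨ofAdd u.val.left.toAdd, ofAdd u.val.right.toAdd⟩ : U6n n) = u.val
        rw [ofAdd_toAdd, ofAdd_toAdd]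
      right_inv := by
        rintro ⟨⟨a, ha⟩, ⟨j, hj⟩⟩
        rw [Prod.mk.injEq]
        exact ⟨Subtype.ext (toAdd_ofAdd a), Subtype.ext (toAdd_ofAdd j)⟩ }
  rw [Fintype.card_congr e, Fintype.card_prod, h3, card_eps0]
lemma sum_option3 (f : Option (ZMod 3) → ℕ) :
    ∑ o : Option (ZMod 3), f o = f none + (f (some 0) + (f (some 1) + f (some 2))) := by
  rw [Fintype.sum_option,
    show (Finset.univ : Finset (ZMod 3)) = {0, 1, 2} by decide,
    Finset.sum_insert (by decide), Finset.sum_insert (by decide), Finset.sum_singleton]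

lemma card_filter_decomp {n : ℕ} [NeZero n] (W : Finset (Vx n)) :
    W.card = (W.filter (fun u => cls n u = none)).card
      + ((W.filter (fun u => cls n u = some 0)).card
        + ((W.filter (fun u => cls n u = some 1)).card
          + (W.filter (fun u => cls n u = some 2)).card)) := by
  rw [Finset.card_eq_sum_card_fiberwise (f := cls n) (t := Finset.univ)
    (fun u _ => Finset.mem_univ _), sum_option3]

lemma card_Cl_some {n : ℕ} [NeZero n] (x : ZMod 3) :
    ((Finset.univ : Finset (Vx n)).filter (fun u => cls n u = some x)).card = n := by
  have h := card_fiber_some (n := n) x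
  rwa [Fintype.card_subtype] at h

lemma card_Cl_none {n : ℕ} [NeZero n] :
    ((Finset.univ : Finset (Vx n)).filter (fun u => cls n u = none)).card = 2 * n := by
  have h := card_fiber_none (n := n)
  rwa [Fintype.card_subtype] at h
open Finset in
lemma filter_card_ge {n : ℕ} [NeZero n] {W : Finset (Vx n)} (hW : Resolving n W)
    (o : Option (ZMod 3)) :
    (Finset.univ.filter (fun u => cls n u = o)).card
      ≤ (W.filter (fun u => cls n u = o)).card + 1 := by
  have hR1 := ((resolving_iff n W).mp hW).1
  have hsub : Finset.univ.filter (fun u => cls n u = o)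
      ⊆ W.filter (fun u => cls n u = o) ∪ ((Finset.univ.filter (fun u => cls n u = o)) \ W) := by
    intro u hu
    rw [mem_union]
    by_cases h : u ∈ W
    · exact Or.inl (mem_filter.mpr ⟨h, (mem_filter.mp hu).2⟩)
    · exact Or.inr (mem_sdiff.mpr ⟨hu, h⟩)
  have hS : (((Finset.univ.filter (fun u => cls n u = o))) \ W).card ≤ 1 := by
    by_contra h
    push_neg at h
    obtain ⟨a, ha, b, hb, hab⟩ := Finset.one_lt_card.mp h
    rw [mem_sdiff, mem_filter] at ha hb
    rcases hR1 a b hab (ha.1.2.trans hb.1.2.symm) with h' | h'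
    · exact ha.2 h'
    · exact hb.2 h'
  calc (Finset.univ.filter (fun u => cls n u = o)).card
      ≤ _ := card_le_card hsub
    _ ≤ _ + _ := card_union_le _ _
    _ ≤ _ + 1 := by omega

open Finset in
lemma pair_lemma {n : ℕ} [NeZero n] {W : Finset (Vx n)} (hW : Resolving n W) {x y : ZMod 3}
    (hxy : x ≠ y) (hx : W.filter (fun u => cls n u = some x) = ∅)
    (hy : W.filter (fun u => cls n u = some y) = ∅) : False := by
  have hR2 := ((resolving_iff n W).mp hW).2
  have hu : va n x ∉ W := fun h => by
    have h2 : va n x ∈ W.filter (fun u => cls n u = some x) :=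
      mem_filter.mpr ⟨h, cls_va x⟩
    rw [hx] at h2
    exact absurd h2 (notMem_empty _)
  have hv : va n y ∉ W := fun h => by
    have h2 : va n y ∈ W.filter (fun u => cls n u = some y) :=
      mem_filter.mpr ⟨h, cls_va y⟩
    rw [hy] at h2
    exact absurd h2 (notMem_empty _)
  have hne : va n x ≠ va n y := fun e => hxy (by
    have h2 := congrArg (cls n) e
    rwa [cls_va, cls_va, Option.some_inj] at h2)
  have hcls : cls n (va n x) ≠ cls n (va n y) := by
    rw [cls_va, cls_va]
    simpa using hxy
  obtain ⟨w, hw, hc⟩ := hR2 _ _ hne hcls hu hv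
  rcases hc with h | h
  · have h2 : w ∈ W.filter (fun u => cls n u = some x) :=
      mem_filter.mpr ⟨hw, by rwa [cls_va] at h⟩
    rw [hx] at h2
    exact absurd h2 (notMem_empty _)
  · have h2 : w ∈ W.filter (fun u => cls n u = some y) :=
      mem_filter.mpr ⟨hw, by rwa [cls_va] at h⟩
    rw [hy] at h2
    exact absurd h2 (notMem_empty _)

/-- representative of each class -/
def rep (n : ℕ) [NeZero n] (o : Option (ZMod 3)) : Vx n := o.elim (vc n) (va n)

lemma cls_rep {n : ℕ} [NeZero n] (o : Option (ZMod 3)) : cls n (rep n o) = o := by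
  cases o with
  | none => exact cls_vc
  | some x => exact cls_va x

lemma rep_injective {n : ℕ} [NeZero n] : Function.Injective (rep n) := by
  intro o o' h
  rw [← cls_rep (n := n) o, ← cls_rep (n := n) o', h]

open Finset in
lemma mem_image_rep_iff {n : ℕ} [NeZero n] (u : Vx n) :
    u ∈ Finset.univ.image (rep n) ↔ u = rep n (cls n u) := by
  constructor
  · intro h
    obtain ⟨o, -, ho⟩ := mem_image.mp h
    rw [← ho, cls_rep]
  · intro h
    exact mem_image.mpr ⟨cls n u, mem_univ _, h.symm⟩

open Finset in
lemma exists_in_erase {n : ℕ} [NeZero n] (o : Option (ZMod 3)) (r : Vx n)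
    (h2 : 2 ≤ (Finset.univ.filter (fun u => cls n u = o)).card) :
    ∃ w ∈ (Finset.univ.filter (fun u => cls n u = o)).erase r, True := by
  have := Finset.pred_card_le_card_erase (s := Finset.univ.filter (fun u => cls n u = o)) (a := r)
  have hpos : 0 < ((Finset.univ.filter (fun u => cls n u = o)).erase r).card := by omega
  obtain ⟨w, hw⟩ := Finset.card_pos.mp hpos
  exact ⟨w, hw, trivial⟩
open Finset

lemma card_univ_Vx (n : ℕ) [NeZero n] : (Finset.univ : Finset (Vx n)).card = 5 * n := by
  have h := card_filter_decomp (n := n) Finset.univ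
  rw [card_Cl_none, card_Cl_some, card_Cl_some, card_Cl_some] at h
  omega

lemma card_image_rep (n : ℕ) [NeZero n] :
    (Finset.univ.image (rep n)).card = 4 := by
  rw [Finset.card_image_of_injective _ rep_injective]
  decide

lemma resolving_Wbig (n : ℕ) [NeZero n] (h2n : 2 ≤ n) :
    Resolving n (Finset.univ \ Finset.univ.image (rep n)) := by
  rw [resolving_iff]
  constructor
  · intro u v huv hc
    by_contra hor
    push_neg at hor
    have hu : u ∈ Finset.univ.image (rep n) := by
      have := hor.1
      rw [mem_sdiff] at this
      push_neg at this
      exact this (mem_univ _)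
    have hv : v ∈ Finset.univ.image (rep n) := by
      have := hor.2
      rw [mem_sdiff] at this
      push_neg at this
      exact this (mem_univ _)
    rw [mem_image_rep_iff] at hu hv
    exact huv (hu.trans (by rw [hc, ← hv]))
  · intro u v huv hc _ _
    have h2 : 2 ≤ (Finset.univ.filter (fun w => cls n w = cls n u)).card := by
      cases ho : cls n u with
      | none => rw [card_Cl_none]; omega
      | some x => rw [card_Cl_some]; omega
    obtain ⟨w, hw, -⟩ := exists_in_erase (cls n u) (rep n (cls n u)) h2
    rw [mem_erase, mem_filter] at hw
    refine ⟨w, ?_, Or.inl hw.2.2⟩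
    rw [mem_sdiff]
    refine ⟨mem_univ _, fun him => ?_⟩
    rw [mem_image_rep_iff, hw.2.2] at him
    exact hw.1 him

lemma resolving_Wsmall (n : ℕ) [NeZero n] (hn1 : n = 1) :
    Resolving n (Finset.univ \ {rep n none, rep n (some 0)}) := by
  rw [resolving_iff]
  have hmem : ∀ u : Vx n, u ∉ Finset.univ \ ({rep n none, rep n (some 0)} : Finset (Vx n)) →
      u = rep n (cls n u) ∧ (cls n u = none ∨ cls n u = some 0) := by
    intro u hu
    rw [mem_sdiff] at hu
    push_neg at hu
    have h2 := hu (mem_univ _)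
    rw [mem_insert, mem_singleton] at h2
    rcases h2 with h | h
    · have hcu : cls n u = none := by rw [h, cls_rep]
      exact ⟨by rw [hcu, ← h], Or.inl hcu⟩
    · have hcu : cls n u = some 0 := by rw [h, cls_rep]
      exact ⟨by rw [hcu, ← h], Or.inr hcu⟩
  have key : ∀ u : Vx n, cls n u = none →
      ∃ w ∈ Finset.univ \ ({rep n none, rep n (some 0)} : Finset (Vx n)), cls n w = cls n u := by
    intro u hcu
    have h2 : 2 ≤ (Finset.univ.filter (fun w => cls n w = (none : Option (ZMod 3)))).card := by
      rw [card_Cl_none]; omega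
    obtain ⟨w, hw, -⟩ := exists_in_erase none (rep n none) h2
    rw [mem_erase, mem_filter] at hw
    refine ⟨w, ?_, by rw [hw.2.2, hcu]⟩
    rw [mem_sdiff, mem_insert, mem_singleton]
    refine ⟨mem_univ _, ?_⟩
    rintro (h | h)
    · exact hw.1 h
    · have h3 : cls n w = some 0 := by rw [h, cls_rep]
      rw [hw.2.2] at h3
      exact Option.some_ne_none _ h3.symm
  constructor
  · intro u v huv hc
    by_contra hor
    push_neg at hor
    obtain ⟨hu, -⟩ := hmem u hor.1
    obtain ⟨hv, -⟩ := hmem v hor.2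
    exact huv (hu.trans (by rw [hc, ← hv]))
  · intro u v huv hc hu hv
    obtain ⟨-, hu2⟩ := hmem u hu
    obtain ⟨-, hv2⟩ := hmem v hv
    rcases hu2 with h | h
    · obtain ⟨w, hw, hcw⟩ := key u h
      exact ⟨w, hw, Or.inl hcw⟩
    · rcases hv2 with h' | h'
      · obtain ⟨w, hw, hcw⟩ := key v h'
        exact ⟨w, hw, Or.inr hcw⟩
      · exact absurd (h.trans h'.symm) hc
/-- The metric dimension of the non-commuting graph of `U_{6n}` is `3` if `n = 1` and
`5n - 4` if `n > 1`. -/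
theorem U6n_metric_dimension (n : ℕ) (hn : 1 ≤ n) :
    IsLeast {k | ∃ W : Finset {x : U6n n // x ∉ Subgroup.center (U6n n)},
      Resolving n W ∧ W.card = k} (if n = 1 then 3 else 5 * n - 4) := by
  haveI : NeZero n := ⟨by omega⟩
  constructor
  · by_cases h1 : n = 1
    · rw [if_pos h1]
      refine ⟨Finset.univ \ {rep n none, rep n (some 0)}, resolving_Wsmall n h1, ?_⟩
      have hne : rep n none ≠ rep n (some 0) := fun e => by
        have := rep_injective e
        exact Option.some_ne_none _ this.symm
      rw [Finset.card_sdiff_of_subset (Finset.subset_univ _), card_univ_Vx, Finset.card_pair hne]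
      omega
    · rw [if_neg h1]
      refine ⟨Finset.univ \ Finset.univ.image (rep n), resolving_Wbig n (by omega), ?_⟩
      rw [Finset.card_sdiff_of_subset (Finset.subset_univ _), card_univ_Vx, card_image_rep]
  · rintro k ⟨W, hW, rfl⟩
    have hdec := card_filter_decomp W
    by_cases h1 : n = 1
    · rw [if_pos h1]
      have hd := filter_card_ge hW none
      rw [card_Cl_none] at hd
      have p01 : ¬((W.filter (fun u => cls n u = some 0)).card = 0
          ∧ (W.filter (fun u => cls n u = some 1)).card = 0) := fun ⟨ha, hb⟩ =>
        pair_lemma hW (show (0:ZMod 3) ≠ 1 by decide)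
          (Finset.card_eq_zero.mp ha) (Finset.card_eq_zero.mp hb)
      have p02 : ¬((W.filter (fun u => cls n u = some 0)).card = 0
          ∧ (W.filter (fun u => cls n u = some 2)).card = 0) := fun ⟨ha, hb⟩ =>
        pair_lemma hW (show (0:ZMod 3) ≠ 2 by decide)
          (Finset.card_eq_zero.mp ha) (Finset.card_eq_zero.mp hb)
      have p12 : ¬((W.filter (fun u => cls n u = some 1)).card = 0
          ∧ (W.filter (fun u => cls n u = some 2)).card = 0) := fun ⟨ha, hb⟩ =>
        pair_lemma hW (show (1:ZMod 3) ≠ 2 by decide)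
          (Finset.card_eq_zero.mp ha) (Finset.card_eq_zero.mp hb)
      omega
    · rw [if_neg h1]
      have hd := filter_card_ge hW none
      rw [card_Cl_none] at hd
      have h0 := filter_card_ge hW (some 0)
      rw [card_Cl_some] at h0
      have h2 := filter_card_ge hW (some 1)
      rw [card_Cl_some] at h2
      have h3 := filter_card_ge hW (some 2)
      rw [card_Cl_some] at h3
      omega
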